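/- (Invariance of the Poincaré-bundle log-norm under the symplectic group) Let Ω be a complex symmetric g×g matrix with Im Ω positive definite, W a complex row vector of length g, Z a complex column vector of length g, ρ ∈ ℂ, and let (A B; C D) ∈ Sp_{2g}(ℝ) be a real symplectic matrix in g×g blocks such that CΩ + D is invertible. Then L((AΩ+B)(CΩ+D)^{−1}, W(CΩ+D)^{−1}, ᵗ(CΩ+D)^{−1}Z, ρ − WᵗCᵗ(CΩ+D)^{−1}Z) = L(Ω, W, Z, ρ), where L(Ω,W,Z,ρ) = −2π·Im(ρ) + 2π·Im(W)·(Im Ω)^{−1}·Im(Z). -/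

import Mathlib

open Matrix

private theorem matrixMapInv {n : Type*} [Fintype n] [DecidableEq n] {α β : Type*} [Field α]
    [Field β] (f : α →+* β) (M : Matrix n n α) : (M⁻¹).map f = (M.map f)⁻¹ := by
  have hd : (M.map f).det = f M.det := by
    rw [RingHom.map_det f M, RingHom.mapMatrix_apply]
  have ha : (M.map f).adjugate = M.adjugate.map f := by
    rw [← RingHom.mapMatrix_apply, ← RingHom.map_adjugate, RingHom.mapMatrix_apply]
  rw [Matrix.inv_def, Matrix.inv_def, hd, ha]
  ext i j
  simp [Matrix.map_apply, Ring.inverse_eq_inv', map_inv₀, smul_eq_mul]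

/-- The logarithm of the canonical invariant metric on the Poincaré bundle:
`L(Ω,W,Z,ρ) = −2π·Im(ρ) + 2π·Im(W)·(Im Ω)⁻¹·Im(Z)`. -/
noncomputable def poincareLogNorm {g : ℕ} (Ω : Matrix (Fin g) (Fin g) ℂ)
    (W Z : Fin g → ℂ) (ρ : ℂ) : ℝ :=
  -2 * Real.pi * ρ.im +
    2 * Real.pi *
      dotProduct (fun i => (W i).im)
        ((Ω.map Complex.im)⁻¹.mulVec (fun j => (Z j).im))

/-- Invariance of the Poincaré-bundle log-norm under the symplectic group: for a real
symplectic block matrix `(A B; C D) ∈ Sp_{2g}(ℝ)` with `CΩ + D` invertible,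
`L((AΩ+B)(CΩ+D)⁻¹, W(CΩ+D)⁻¹, ᵗ(CΩ+D)⁻¹Z, ρ − WᵗCᵗ(CΩ+D)⁻¹Z) = L(Ω, W, Z, ρ)`. -/
theorem poincareLogNorm_symplectic_invariance
    {g : ℕ} (Ω : Matrix (Fin g) (Fin g) ℂ)
    (hsymm : Ω.IsSymm) (hpos : (Ω.map Complex.im).PosDef)
    (W Z : Fin g → ℂ) (ρ : ℂ)
    (A B C D : Matrix (Fin g) (Fin g) ℝ)
    (hsymp : (Matrix.fromBlocks A B C D)ᵀ *
        Matrix.fromBlocks 0 1 (-1) 0 * Matrix.fromBlocks A B C D =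
      Matrix.fromBlocks 0 1 (-1) 0)
    (hinv : IsUnit (C.map (fun x : ℝ => (x : ℂ)) * Ω + D.map (fun x : ℝ => (x : ℂ))).det) :
    poincareLogNorm
      ((A.map (fun x : ℝ => (x : ℂ)) * Ω + B.map (fun x : ℝ => (x : ℂ))) *
        (C.map (fun x : ℝ => (x : ℂ)) * Ω + D.map (fun x : ℝ => (x : ℂ)))⁻¹)
      (Matrix.vecMul W
        (C.map (fun x : ℝ => (x : ℂ)) * Ω + D.map (fun x : ℝ => (x : ℂ)))⁻¹)
      (((C.map (fun x : ℝ => (x : ℂ)) * Ω + D.map (fun x : ℝ => (x : ℂ)))⁻¹)ᵀ.mulVec Z)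
      (ρ - dotProduct
        (Matrix.vecMul W
          ((C.map (fun x : ℝ => (x : ℂ)))ᵀ *
            ((C.map (fun x : ℝ => (x : ℂ)) * Ω + D.map (fun x : ℝ => (x : ℂ)))⁻¹)ᵀ)) Z) =
    poincareLogNorm Ω W Z ρ := by
  classical
  -- the real symplectic relations
  obtain ⟨r1, r2, r3, r4⟩ : (Aᵀ * C = Cᵀ * A) ∧ (Aᵀ * D - Cᵀ * B = 1) ∧
      (Dᵀ * A - Bᵀ * C = 1) ∧ (Bᵀ * D = Dᵀ * B) := by
    have hexp := hsymp
    rw [Matrix.fromBlocks_transpose, Matrix.fromBlocks_multiply,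
      Matrix.fromBlocks_multiply] at hexp
    simp only [Matrix.mul_zero, Matrix.mul_one, Matrix.mul_neg, Matrix.zero_mul, Matrix.neg_mul,
      zero_add, add_zero, Matrix.fromBlocks_inj] at hexp
    obtain ⟨h1, h2, h3, h4⟩ := hexp
    refine ⟨?_, ?_, ?_, ?_⟩
    · rw [← sub_eq_zero, ← h1]; abel
    · rw [← h2]; abel
    · rw [← neg_inj, neg_sub, ← h3]; abel
    · rw [← sub_eq_zero, ← h4]; abel
  have r5 : C * Dᵀ = D * Cᵀ := by
    set M := Matrix.fromBlocks A B C D with hM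
    set J : Matrix (Fin g ⊕ Fin g) (Fin g ⊕ Fin g) ℝ := Matrix.fromBlocks 0 1 (-1) 0 with hJ
    have hJJ : J * -J = 1 := by
      rw [hJ, Matrix.fromBlocks_neg, Matrix.fromBlocks_multiply]
      simp [Matrix.fromBlocks_one]
    have hJJ' : -J * J = 1 := by rw [neg_mul, ← mul_neg, hJJ]
    have hL : (-J * Mᵀ * J) * M = 1 := by
      rw [Matrix.mul_assoc, Matrix.mul_assoc, ← Matrix.mul_assoc Mᵀ, hsymp, hJJ']
    have hR : M * (-J * Mᵀ * J) = 1 := mul_eq_one_comm.mp hL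
    have h1 : M * -J * Mᵀ * J = 1 := by rw [← hR]; noncomm_ring
    have h2 : M * -J * Mᵀ = -J := by
      calc M * -J * Mᵀ = (M * -J * Mᵀ * J) * -J := by
            rw [Matrix.mul_assoc (M * -J * Mᵀ) J (-J), hJJ, Matrix.mul_one]
      _ = -J := by rw [h1, Matrix.one_mul]
    have hMJ : M * J * Mᵀ = J := by
      have := congrArg Neg.neg h2
      simpa [neg_neg] using this
    rw [hM, hJ, Matrix.fromBlocks_transpose, Matrix.fromBlocks_multiply,
      Matrix.fromBlocks_multiply] at hMJ
    simp only [Matrix.mul_zero, Matrix.mul_one, Matrix.mul_neg, Matrix.zero_mul, Matrix.neg_mul,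
      zero_add, add_zero, Matrix.fromBlocks_inj] at hMJ
    obtain ⟨-, -, -, h⟩ := hMJ
    rw [← sub_eq_zero, ← h]; abel
  -- complexify
  set Ac := A.map (fun x : ℝ => (x : ℂ)) with hAcdef
  set Bc := B.map (fun x : ℝ => (x : ℂ)) with hBcdef
  set Cc := C.map (fun x : ℝ => (x : ℂ)) with hCcdef
  set Dc := D.map (fun x : ℝ => (x : ℂ)) with hDcdef
  have r1c : Acᵀ * Cc = Ccᵀ * Ac := by
    have h2 := congrArg (fun X => Complex.ofRealHom.mapMatrix X) r1
    simp only [_root_.map_mul, RingHom.mapMatrix_apply, Matrix.transpose_map] at h2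
    exact h2
  have r2c : Acᵀ * Dc - Ccᵀ * Bc = 1 := by
    have h2 := congrArg (fun X => Complex.ofRealHom.mapMatrix X) r2
    simp only [_root_.map_sub, _root_.map_mul, _root_.map_one, RingHom.mapMatrix_apply,
      Matrix.transpose_map] at h2
    exact h2
  have r3c : Dcᵀ * Ac - Bcᵀ * Cc = 1 := by
    have h2 := congrArg (fun X => Complex.ofRealHom.mapMatrix X) r3
    simp only [_root_.map_sub, _root_.map_mul, _root_.map_one, RingHom.mapMatrix_apply,
      Matrix.transpose_map] at h2
    exact h2
  have r4c : Bcᵀ * Dc = Dcᵀ * Bc := by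
    have h2 := congrArg (fun X => Complex.ofRealHom.mapMatrix X) r4
    simp only [_root_.map_mul, RingHom.mapMatrix_apply, Matrix.transpose_map] at h2
    exact h2
  have r5c : Cc * Dcᵀ = Dc * Ccᵀ := by
    have h2 := congrArg (fun X => Complex.ofRealHom.mapMatrix X) r5
    simp only [_root_.map_mul, RingHom.mapMatrix_apply, Matrix.transpose_map] at h2
    exact h2
  -- names
  set N := Cc * Ω + Dc with hNdef
  set N₁ := N⁻¹ with hN₁def
  set M' := Ac * Ω + Bc with hM'def
  set Ωb := Ω.map (starRingEnd ℂ) with hΩbdef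
  set Nb := Cc * Ωb + Dc with hNbdef
  set Nb₁ := Nb⁻¹ with hNb₁def
  set Mb' := Ac * Ωb + Bc with hMb'def
  set Yr := Ω.map Complex.im with hYrdef
  set Yc := Yr.map (fun x : ℝ => (x : ℂ)) with hYcdef
  set Yinv := Yc⁻¹ with hYinvdef
  have hconjC : Cc.map (starRingEnd ℂ) = Cc := by
    ext i j; simp [hCcdef, Matrix.map_apply, Complex.conj_ofReal]
  have hconjA : Ac.map (starRingEnd ℂ) = Ac := by
    ext i j; simp [hAcdef, Matrix.map_apply, Complex.conj_ofReal]
  have hconjB : Bc.map (starRingEnd ℂ) = Bc := by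
    ext i j; simp [hBcdef, Matrix.map_apply, Complex.conj_ofReal]
  have hconjD : Dc.map (starRingEnd ℂ) = Dc := by
    ext i j; simp [hDcdef, Matrix.map_apply, Complex.conj_ofReal]
  have hmapN : N.map (starRingEnd ℂ) = Nb := by
    rw [hNdef, hNbdef]
    ext i j
    simp [Matrix.map_apply, Matrix.add_apply, Matrix.mul_apply, map_sum, hCcdef, hDcdef,
      Complex.conj_ofReal, hΩbdef]
  have hmapM' : M'.map (starRingEnd ℂ) = Mb' := by
    rw [hM'def, hMb'def]
    ext i j
    simp [Matrix.map_apply, Matrix.add_apply, Matrix.mul_apply, map_sum, hAcdef, hBcdef,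
      Complex.conj_ofReal, hΩbdef]
  -- determinants
  have hdetNb : IsUnit Nb.det := by
    rw [← hmapN, ← RingHom.mapMatrix_apply, ← RingHom.map_det]
    simpa [isUnit_iff_ne_zero] using hinv.ne_zero
  have hYrdet : IsUnit Yr.det := isUnit_iff_ne_zero.mpr (ne_of_gt hpos.det_pos)
  have hYcdet : IsUnit Yc.det := by
    rw [hYcdef]
    have : Yr.map (fun x : ℝ => (x : ℂ)) = Complex.ofRealHom.mapMatrix Yr := rfl
    rw [this, ← RingHom.map_det]
    simpa [isUnit_iff_ne_zero] using hYrdet.ne_zero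
  -- inverse facts
  have hNl : N₁ * N = 1 := Matrix.nonsing_inv_mul N hinv
  have hNr : N * N₁ = 1 := Matrix.mul_nonsing_inv N hinv
  have hNbl : Nb₁ * Nb = 1 := Matrix.nonsing_inv_mul Nb hdetNb
  have hNbr : Nb * Nb₁ = 1 := Matrix.mul_nonsing_inv Nb hdetNb
  have hYl : Yinv * Yc = 1 := Matrix.nonsing_inv_mul Yc hYcdet
  have hYr' : Yc * Yinv = 1 := Matrix.mul_nonsing_inv Yc hYcdet
  have hNtr : Nᵀ * N₁ᵀ = 1 := by
    have := congrArg Matrix.transpose hNl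
    simpa [Matrix.transpose_mul] using this
  have hNtl : N₁ᵀ * Nᵀ = 1 := by
    have := congrArg Matrix.transpose hNr
    simpa [Matrix.transpose_mul] using this
  have hNbtr : Nbᵀ * Nb₁ᵀ = 1 := by
    have := congrArg Matrix.transpose hNbl
    simpa [Matrix.transpose_mul] using this
  have hNbtl : Nb₁ᵀ * Nbᵀ = 1 := by
    have := congrArg Matrix.transpose hNbr
    simpa [Matrix.transpose_mul] using this
  have hN₁σ : N₁.map (starRingEnd ℂ) = Nb₁ := by
    rw [hN₁def, matrixMapInv (starRingEnd ℂ) N, hmapN, hNb₁def]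
  -- imaginary-part bridge
  have hgen : ∀ X : Matrix (Fin g) (Fin g) ℂ,
      (2 * Complex.I) • ((X.map Complex.im).map (fun x : ℝ => (x : ℂ))) =
        X - X.map (starRingEnd ℂ) := by
    intro X
    ext i j
    simp only [Matrix.smul_apply, Matrix.map_apply, Matrix.sub_apply, Complex.sub_conj,
      smul_eq_mul]
    push_cast
    ring
  have hsub : Ω - Ωb = (2 * Complex.I) • Yc := by
    rw [hYcdef, hYrdef, hgen Ω, hΩbdef]
  have hYsymm : Ycᵀ = Yc := by
    rw [hYcdef, hYrdef, ← Matrix.transpose_map, ← Matrix.transpose_map, hsymm.eq]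
  have hΩbsymm : Ωbᵀ = Ωb := by
    rw [hΩbdef, ← Matrix.transpose_map, hsymm.eq]
  have hNsub : N - Nb = (2 * Complex.I) • (Cc * Yc) := by
    rw [hNdef, hNbdef, add_sub_add_right_eq_sub, ← Matrix.mul_sub, hsub, Matrix.mul_smul]
  have hNbeq : Nb = N - (2 * Complex.I) • (Cc * Yc) := by rw [← hNsub]; abel
  have hNeq : N = Nb + (2 * Complex.I) • (Cc * Yc) := by rw [← hNsub]; abel
  -- symmetry relations involving C
  have hNC : N * Ccᵀ = Cc * Nᵀ := by
    rw [hNdef, Matrix.transpose_add, Matrix.transpose_mul, hsymm.eq, Matrix.add_mul,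
      Matrix.mul_add, ← Matrix.mul_assoc, r5c]
  have hNbC : Nb * Ccᵀ = Cc * Nbᵀ := by
    rw [hNbdef, Matrix.transpose_add, Matrix.transpose_mul, hΩbsymm, Matrix.add_mul,
      Matrix.mul_add, ← Matrix.mul_assoc, r5c]
  have hP : N₁ * Cc = Ccᵀ * N₁ᵀ := by
    calc N₁ * Cc = N₁ * Cc * (Nᵀ * N₁ᵀ) := by rw [hNtr, Matrix.mul_one]
    _ = N₁ * (Cc * Nᵀ) * N₁ᵀ := by simp only [Matrix.mul_assoc]
    _ = N₁ * (N * Ccᵀ) * N₁ᵀ := by rw [hNC]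
    _ = (N₁ * N) * (Ccᵀ * N₁ᵀ) := by simp only [Matrix.mul_assoc]
    _ = Ccᵀ * N₁ᵀ := by rw [hNl, Matrix.one_mul]
  have hPb : Nb₁ * Cc = Ccᵀ * Nb₁ᵀ := by
    calc Nb₁ * Cc = Nb₁ * Cc * (Nbᵀ * Nb₁ᵀ) := by rw [hNbtr, Matrix.mul_one]
    _ = Nb₁ * (Cc * Nbᵀ) * Nb₁ᵀ := by simp only [Matrix.mul_assoc]
    _ = Nb₁ * (Nb * Ccᵀ) * Nb₁ᵀ := by rw [hNbC]
    _ = (Nb₁ * Nb) * (Ccᵀ * Nb₁ᵀ) := by simp only [Matrix.mul_assoc]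
    _ = Ccᵀ * Nb₁ᵀ := by rw [hNbl, Matrix.one_mul]
  -- the Q matrix and the four kernel identities
  set Q := Nb * (Yinv * Nᵀ) with hQdef
  have hNNb : N₁ * Nb = 1 - (2 * Complex.I) • (N₁ * (Cc * Yc)) := by
    rw [hNbeq, Matrix.mul_sub, hNl, Matrix.mul_smul]
  have hQN : Q * N₁ᵀ = Nb * Yinv := by
    rw [hQdef, Matrix.mul_assoc, Matrix.mul_assoc, hNtr, Matrix.mul_one]
  have K11 : N₁ * (Q * N₁ᵀ) = Yinv - (2 * Complex.I) • (Ccᵀ * N₁ᵀ) := by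
    rw [hQN, ← Matrix.mul_assoc, hNNb, Matrix.sub_mul, Matrix.one_mul, Matrix.smul_mul,
      Matrix.mul_assoc N₁ (Cc * Yc) Yinv, Matrix.mul_assoc Cc Yc Yinv, hYr',
      Matrix.mul_one, hP]
  have K21 : Nb₁ * (Q * N₁ᵀ) = Yinv := by
    rw [hQN, ← Matrix.mul_assoc, hNbl, Matrix.one_mul]
  have hNtNbt : Nᵀ * Nb₁ᵀ = 1 + (2 * Complex.I) • (Yc * (Nb₁ * Cc)) := by
    have h1 : Nb₁ * N = 1 + (2 * Complex.I) • (Nb₁ * (Cc * Yc)) := by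
      rw [hNeq, Matrix.mul_add, hNbl, Matrix.mul_smul]
    have := congrArg Matrix.transpose h1
    simpa [Matrix.transpose_mul, Matrix.transpose_add, Matrix.transpose_smul, hYsymm,
      Matrix.mul_assoc, hPb] using this
  have hQNb : Q * Nb₁ᵀ = Nb * Yinv + (2 * Complex.I) • Cc := by
    rw [hQdef, Matrix.mul_assoc, Matrix.mul_assoc, hNtNbt, Matrix.mul_add, Matrix.mul_one,
      Matrix.mul_smul, ← Matrix.mul_assoc Yinv Yc (Nb₁ * Cc), hYl, Matrix.one_mul,
      Matrix.mul_add, Matrix.mul_smul, ← Matrix.mul_assoc Nb Nb₁ Cc, hNbr, Matrix.one_mul]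
  have K12 : N₁ * (Q * Nb₁ᵀ) = Yinv := by
    rw [hQNb, Matrix.mul_add, ← Matrix.mul_assoc, hNNb, Matrix.sub_mul, Matrix.one_mul,
      Matrix.smul_mul, Matrix.mul_assoc N₁ (Cc * Yc) Yinv, Matrix.mul_assoc Cc Yc Yinv, hYr',
      Matrix.mul_one, Matrix.mul_smul]
    abel
  have K22 : Nb₁ * (Q * Nb₁ᵀ) = Yinv + (2 * Complex.I) • (Ccᵀ * Nb₁ᵀ) := by
    rw [hQNb, Matrix.mul_add, ← Matrix.mul_assoc, hNbl, Matrix.one_mul, Matrix.mul_smul, hPb]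
  -- symmetry of the transformed period matrix
  have e1 : Ccᵀ * Ac - Acᵀ * Cc = 0 := sub_eq_zero.mpr r1c.symm
  have e2 : Ccᵀ * Bc - Acᵀ * Dc = -1 := by rw [← neg_sub, r2c]
  have e4 : Dcᵀ * Bc - Bcᵀ * Dc = 0 := sub_eq_zero.mpr r4c.symm
  have e4' : Bcᵀ * Dc - Dcᵀ * Bc = 0 := sub_eq_zero.mpr r4c
  have e1' : Acᵀ * Cc - Ccᵀ * Ac = 0 := sub_eq_zero.mpr r1c
  have e3' : Bcᵀ * Cc - Dcᵀ * Ac = -1 := by rw [← neg_sub, r3c]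
  have hsymm' : Nᵀ * M' = M'ᵀ * N := by
    rw [← sub_eq_zero]
    have expand : Nᵀ * M' - M'ᵀ * N =
        Ω * (Ccᵀ * Ac - Acᵀ * Cc) * Ω + Ω * (Ccᵀ * Bc - Acᵀ * Dc) +
          (Dcᵀ * Ac - Bcᵀ * Cc) * Ω + (Dcᵀ * Bc - Bcᵀ * Dc) := by
      rw [hNdef, hM'def, Matrix.transpose_add, Matrix.transpose_add, Matrix.transpose_mul,
        Matrix.transpose_mul, hsymm.eq]
      noncomm_ring
    rw [expand, e1, e2, r3c, e4]
    simp
  have hkey : M'ᵀ * Nb - Nᵀ * Mb' = Ω - Ωb := by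
    have expand : M'ᵀ * Nb - Nᵀ * Mb' =
        Ω * (Acᵀ * Cc - Ccᵀ * Ac) * Ωb + Ω * (Acᵀ * Dc - Ccᵀ * Bc) +
          (Bcᵀ * Cc - Dcᵀ * Ac) * Ωb + (Bcᵀ * Dc - Dcᵀ * Bc) := by
      rw [hNdef, hM'def, hNbdef, hMb'def, Matrix.transpose_add, Matrix.transpose_add,
        Matrix.transpose_mul, Matrix.transpose_mul, hsymm.eq]
      noncomm_ring
    rw [expand, e1', r2c, e3', e4']
    simp [Matrix.neg_mul]
    abel
  -- transformed period matrix: symmetric form and conjugate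
  have hsym2 : M' * N₁ = N₁ᵀ * M'ᵀ := by
    calc M' * N₁ = (N₁ᵀ * Nᵀ) * (M' * N₁) := by rw [hNtl, Matrix.one_mul]
    _ = N₁ᵀ * ((Nᵀ * M') * N₁) := by simp only [Matrix.mul_assoc]
    _ = N₁ᵀ * ((M'ᵀ * N) * N₁) := by rw [hsymm']
    _ = (N₁ᵀ * M'ᵀ) * (N * N₁) := by simp only [Matrix.mul_assoc]
    _ = N₁ᵀ * M'ᵀ := by rw [hNr, Matrix.mul_one]
  have hΩ'conj : (M' * N₁).map (starRingEnd ℂ) = Mb' * Nb₁ := by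
    rw [Matrix.map_mul, hmapM', hN₁σ]
  have hΩ'sub : M' * N₁ - (M' * N₁).map (starRingEnd ℂ) =
      (2 * Complex.I) • (N₁ᵀ * (Yc * Nb₁)) := by
    rw [hΩ'conj, hsym2]
    have c1 : N₁ᵀ * (M'ᵀ * Nb * Nb₁) = N₁ᵀ * M'ᵀ := by
      rw [Matrix.mul_assoc M'ᵀ Nb Nb₁, hNbr, Matrix.mul_one]
    have c2 : N₁ᵀ * (Nᵀ * Mb' * Nb₁) = Mb' * Nb₁ := by
      rw [← Matrix.mul_assoc, ← Matrix.mul_assoc, hNtl, Matrix.one_mul]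
    have step : N₁ᵀ * M'ᵀ - Mb' * Nb₁ = N₁ᵀ * ((M'ᵀ * Nb - Nᵀ * Mb') * Nb₁) := by
      rw [Matrix.sub_mul, Matrix.mul_sub, c1, c2]
    rw [step, hkey, hsub, Matrix.smul_mul, Matrix.mul_smul]
  have hImΩ' : ((M' * N₁).map Complex.im).map (fun x : ℝ => (x : ℂ)) =
      N₁ᵀ * (Yc * Nb₁) := by
    have h2 := hgen (M' * N₁)
    rw [hΩ'sub] at h2
    exact smul_right_injective _ (by simp [Complex.I_ne_zero] : (2 * Complex.I : ℂ) ≠ 0) h2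
  have hQfinal : (((M' * N₁).map Complex.im)⁻¹).map (fun x : ℝ => (x : ℂ)) = Q := by
    have e : (((M' * N₁).map Complex.im)⁻¹).map (fun x : ℝ => (x : ℂ)) =
        (((M' * N₁).map Complex.im).map (fun x : ℝ => (x : ℂ)))⁻¹ :=
      matrixMapInv Complex.ofRealHom _
    rw [e, hImΩ', Matrix.mul_inv_rev, Matrix.mul_inv_rev]
    have h1 : Nb₁⁻¹ = Nb := by rw [hNb₁def, Matrix.nonsing_inv_nonsing_inv Nb hdetNb]
    have h2 : (N₁ᵀ)⁻¹ = Nᵀ := by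
      rw [hN₁def, Matrix.transpose_nonsing_inv,
        Matrix.nonsing_inv_nonsing_inv Nᵀ (by rwa [Matrix.det_transpose])]
    rw [h1, h2, hQdef, ← hYinvdef, Matrix.mul_assoc]
  have hYinvmap : (Yr⁻¹).map (fun x : ℝ => (x : ℂ)) = Yinv := by
    rw [hYinvdef, hYcdef]
    exact matrixMapInv Complex.ofRealHom Yr
  -- reduce to the key real scalar identity
  have key : (fun i => ((W ᵥ* N₁) i).im) ⬝ᵥ
        (((M' * N₁).map Complex.im)⁻¹ *ᵥ (fun j => ((N₁ᵀ *ᵥ Z) j).im)) =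
      (fun i => (W i).im) ⬝ᵥ (Yr⁻¹ *ᵥ (fun j => (Z j).im)) -
        ((W ᵥ* (Ccᵀ * N₁ᵀ)) ⬝ᵥ Z).im := by
    apply Complex.ofReal_injective
    rw [Complex.ofReal_sub]
    have hcast : ∀ (a b : Fin g → ℝ), ((a ⬝ᵥ b : ℝ) : ℂ) =
        (fun i => ((a i : ℂ))) ⬝ᵥ (fun i => ((b i : ℂ))) := fun a b =>
      RingHom.map_dotProduct Complex.ofRealHom a b
    rw [hcast, hcast]
    have hmv : ∀ (R : Matrix (Fin g) (Fin g) ℝ) (v : Fin g → ℝ),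
        (fun i => (((R *ᵥ v) i : ℝ) : ℂ)) = (R.map (fun x : ℝ => (x : ℂ))) *ᵥ
          (fun i => ((v i : ℝ) : ℂ)) := by
      intro R v; funext i; exact RingHom.map_mulVec Complex.ofRealHom R v i
    rw [hmv, hmv, hQfinal, hYinvmap]
    -- now a purely complex computation
    set Wb := fun i => (starRingEnd ℂ) (W i) with hWbdef
    set Zb := fun i => (starRingEnd ℂ) (Z i) with hZbdef
    have hvect : ∀ (v : Fin g → ℂ),
        (2 * Complex.I) • (fun i => ((v i).im : ℂ)) = v - (fun i => (starRingEnd ℂ) (v i)) := by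
      intro v; funext i
      simp only [Pi.smul_apply, Pi.sub_apply, smul_eq_mul, Complex.sub_conj]
      push_cast; ring
    have hw1 : (2 * Complex.I) • (fun i => (((W ᵥ* N₁) i).im : ℂ)) =
        (W ᵥ* N₁) - (Wb ᵥ* Nb₁) := by
      rw [hvect]
      congr 1
      funext i
      rw [show (starRingEnd ℂ) ((W ᵥ* N₁) i) = ((fun j => (starRingEnd ℂ) (W j)) ᵥ*
        (N₁.map (starRingEnd ℂ))) i from RingHom.map_vecMul (starRingEnd ℂ) N₁ W i, hN₁σ]
    have hz1 : (2 * Complex.I) • (fun j => (((N₁ᵀ *ᵥ Z) j).im : ℂ)) =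
        (N₁ᵀ *ᵥ Z) - (Nb₁ᵀ *ᵥ Zb) := by
      rw [hvect]
      congr 1
      funext i
      rw [show (starRingEnd ℂ) ((N₁ᵀ *ᵥ Z) i) = ((N₁ᵀ.map (starRingEnd ℂ)) *ᵥ
        (fun j => (starRingEnd ℂ) (Z j))) i from RingHom.map_mulVec (starRingEnd ℂ) N₁ᵀ Z i,
        Matrix.transpose_map, hN₁σ]
    have hw0 : (2 * Complex.I) • (fun i => ((W i).im : ℂ)) = W - Wb := hvect W
    have hz0 : (2 * Complex.I) • (fun j => ((Z j).im : ℂ)) = Z - Zb := hvect Z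
    set T := (W ᵥ* (Ccᵀ * N₁ᵀ)) ⬝ᵥ Z with hTdef
    have hTb : (starRingEnd ℂ) T = (Wb ᵥ* (Ccᵀ * Nb₁ᵀ)) ⬝ᵥ Zb := by
      rw [hTdef, RingHom.map_dotProduct]
      congr 1
      funext i
      simp only [Function.comp_apply]
      rw [show (starRingEnd ℂ) ((W ᵥ* (Ccᵀ * N₁ᵀ)) i) = ((fun j => (starRingEnd ℂ) (W j)) ᵥ*
        ((Ccᵀ * N₁ᵀ).map (starRingEnd ℂ))) i from
          RingHom.map_vecMul (starRingEnd ℂ) (Ccᵀ * N₁ᵀ) W i,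
        Matrix.map_mul, Matrix.transpose_map, Matrix.transpose_map, hconjC, hN₁σ]
    have hT : (2 * Complex.I) * ((T.im : ℝ) : ℂ) = T - (Wb ᵥ* (Ccᵀ * Nb₁ᵀ)) ⬝ᵥ Zb := by
      rw [← hTb, Complex.sub_conj]; push_cast; ring
    have hI2 : ((2 * Complex.I) * (2 * Complex.I) : ℂ) ≠ 0 := by
      simp [Complex.I_ne_zero]
    apply mul_left_cancel₀ hI2
    have hform : ∀ (w z : Fin g → ℂ) (Mx : Matrix (Fin g) (Fin g) ℂ),
        ((2 * Complex.I) * (2 * Complex.I)) * (w ⬝ᵥ (Mx *ᵥ z)) =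
          ((2 * Complex.I) • w) ⬝ᵥ (Mx *ᵥ ((2 * Complex.I) • z)) := by
      intro w z Mx
      rw [smul_dotProduct, mulVec_smul, dotProduct_smul, smul_eq_mul, smul_eq_mul]
      ring
    rw [mul_sub, hform, hform, hw1, hz1, hw0, hz0, mul_assoc, hT]
    -- the core complex identity
    have comb : ∀ (w z : Fin g → ℂ) (G H : Matrix (Fin g) (Fin g) ℂ),
        (w ᵥ* G) ⬝ᵥ (Q *ᵥ (H *ᵥ z)) = w ⬝ᵥ ((G * (Q * H)) *ᵥ z) := by
      intro w z G H
      rw [Matrix.mulVec_mulVec, ← Matrix.dotProduct_mulVec, Matrix.mulVec_mulVec]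
    rw [Matrix.mulVec_sub, sub_dotProduct, dotProduct_sub, dotProduct_sub,
      comb, comb, comb, comb, K11, K12, K21, K22]
    have hT1 : T = W ⬝ᵥ ((Ccᵀ * N₁ᵀ) *ᵥ Z) := by
      rw [hTdef, Matrix.dotProduct_mulVec]
    have hT2 : (Wb ᵥ* (Ccᵀ * Nb₁ᵀ)) ⬝ᵥ Zb = Wb ⬝ᵥ ((Ccᵀ * Nb₁ᵀ) *ᵥ Zb) := by
      rw [Matrix.dotProduct_mulVec]
    rw [hT1, hT2]
    simp only [Matrix.sub_mulVec, Matrix.add_mulVec, Matrix.smul_mulVec,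
      dotProduct_sub, dotProduct_add, dotProduct_smul, Matrix.mulVec_sub, sub_dotProduct,
      smul_eq_mul]
    ring
  simp only [poincareLogNorm, key, Complex.sub_im]
  ring
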